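/- Consider u two-factor secure sketch systems enrolled from the same biometric: A₀ is uniform on (ZMod 2)^n; for each i ∈ {1,…,u}, Aᵢ = A₀ ⊕ Nᵢ where N₁,…,N_u are random noise vectors in (ZMod 2)^n, K₁,…,K_u are keys with Kᵢ uniform on (ZMod 2)^{mᵢ}, the collection (A₀, N₁,…,N_u, K₁,…,K_u) is mutually independent, Hᵢ is an mᵢ × n binary matrix of full row rank, and Sᵢ := HᵢAᵢ ⊕ Kᵢ. For any choice function c : {1,…,u} → {stored, key}, define Vᵢ := Sᵢ if c(i) = stored and Vᵢ := Kᵢ if c(i) = key. Then the tuple (V₁,…,V_u) consists of mutually independent uniform vectors and is independent of A₀. In other words, if no single system has both its stored data and its key compromised (l = 0), the compromised data leaks no information about the biometric: I(A₀; V) = 0. -/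

import Mathlib

open Classical in
/-- Probability of the event `P` under the probability mass function `μ` on the finite
sample space `Ω`. -/
noncomputable def prMass {Ω : Type*} [Fintype Ω] (μ : Ω → ℝ) (P : Ω → Prop) : ℝ :=
  ∑ ω : Ω, if P ω then μ ω else 0

/-- Mutual information (in bits) between the discrete random variables `X` and `Y` on the
finite probability space `(Ω, μ)`. -/
noncomputable def mutualInfoM {Ω α β : Type*} [Fintype Ω] [Fintype α] [Fintype β]
    (μ : Ω → ℝ) (X : Ω → α) (Y : Ω → β) : ℝ :=
  ∑ x : α, ∑ y : β,
    prMass μ (fun ω => X ω = x ∧ Y ω = y) *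
      Real.logb 2 (prMass μ (fun ω => X ω = x ∧ Y ω = y) /
        (prMass μ (fun ω => X ω = x) * prMass μ (fun ω => Y ω = y)))

open Classical

private lemma sum_ite_const' {α M : Type*} [Fintype α] [AddCommMonoid M] (P : Prop)
    [Decidable P] (f : α → M) :
    (∑ x : α, if P then f x else 0) = if P then ∑ x : α, f x else 0 := by
  split <;> simp

/-- Decompose a probability through the value of a random variable. -/
private lemma prMass_comp {Ω β : Type*} [Fintype Ω] [Fintype β] (μ : Ω → ℝ) (V : Ω → β)
    (Q : β → Prop) :
    prMass μ (fun ω => Q (V ω)) = ∑ v : β, if Q v then prMass μ (fun ω => V ω = v) else 0 := by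
  simp only [prMass]
  rw [Finset.sum_congr rfl fun v (_ : v ∈ Finset.univ) =>
    (sum_ite_const' (Q v) fun ω => if V ω = v then μ ω else 0).symm]
  rw [Finset.sum_comm]
  refine Finset.sum_congr rfl fun ω _ => Eq.symm ?_
  calc (∑ v : β, if Q v then (if V ω = v then μ ω else 0) else 0)
      = ∑ v : β, if V ω = v then (if Q (V ω) then μ ω else 0) else 0 := by
        refine Finset.sum_congr rfl fun v _ => ?_
        by_cases h : V ω = v
        · subst h; simp
        · simp [h]
    _ = if Q (V ω) then μ ω else 0 := by
        rw [Finset.sum_ite_eq]; simp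

/-- Summing over the keys: for fixed offsets `X i`, the map `kk ↦ (X + kk or kk)` hits any
target `v` exactly once. -/
private lemma sum_kk {u : ℕ} {m : Fin u → ℕ} (c : Fin u → Bool)
    (X : ∀ i, Fin (m i) → ZMod 2) (v : ∀ i, Fin (m i) → ZMod 2) (C : ℝ) :
    (∑ kk : ∀ i, Fin (m i) → ZMod 2,
      if (fun i => if c i then X i + kk i else kk i) = v then C else 0) = C := by
  have hiff : ∀ kk : ∀ i, Fin (m i) → ZMod 2,
      ((fun i => if c i then X i + kk i else kk i) = v)
        ↔ kk = fun i => if c i then v i - X i else v i := by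
    intro kk
    rw [funext_iff, funext_iff]
    refine forall_congr' fun i => ?_
    by_cases h : c i
    · simp only [h, if_true]
      rw [eq_sub_iff_add_eq, add_comm]
    · simp [h]
  simp only [hiff]
  simp

private lemma prod_pow_mul_prod_one_div {u : ℕ} (m : Fin u → ℕ) :
    ((∏ i, 2 ^ (m i) : ℕ) : ℝ) * (∏ i, ((1 : ℝ) / 2 ^ (m i))) = 1 := by
  push_cast
  rw [← Finset.prod_mul_distrib]
  refine Finset.prod_eq_one fun i _ => ?_
  rw [mul_one_div, div_self (pow_ne_zero _ two_ne_zero)]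

private theorem stmt_14_aux (n u : ℕ) (m : Fin u → ℕ)
    (H : ∀ i, Matrix (Fin (m i)) (Fin n) (ZMod 2))
    (ν : Fin u → (Fin n → ZMod 2) → ℝ)
    (hν1 : ∀ i, ∑ x, ν i x = 1)
    (c : Fin u → Bool) :
    (∀ (i : Fin u) (vi : Fin (m i) → ZMod 2),
        prMass (fun ω : (Fin n → ZMod 2) × (∀ _ : Fin u, Fin n → ZMod 2)
            × (∀ i : Fin u, Fin (m i) → ZMod 2) =>
            (1 / 2 ^ n) * (∏ i, ν i (ω.2.1 i)) * ∏ i, ((1 : ℝ) / 2 ^ (m i)))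
          (fun ω =>
            (fun j => if c j then (H j).mulVec (ω.1 + ω.2.1 j) + ω.2.2 j else ω.2.2 j) i = vi)
          = 1 / 2 ^ (m i))
    ∧ (∀ v : ∀ i : Fin u, Fin (m i) → ZMod 2,
        prMass (fun ω : (Fin n → ZMod 2) × (∀ _ : Fin u, Fin n → ZMod 2)
            × (∀ i : Fin u, Fin (m i) → ZMod 2) =>
            (1 / 2 ^ n) * (∏ i, ν i (ω.2.1 i)) * ∏ i, ((1 : ℝ) / 2 ^ (m i)))
          (fun ω =>
            (fun j => if c j then (H j).mulVec (ω.1 + ω.2.1 j) + ω.2.2 j else ω.2.2 j) = v)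
          = ∏ i, ((1 : ℝ) / 2 ^ (m i)))
    ∧ (∀ (a : Fin n → ZMod 2) (v : ∀ i : Fin u, Fin (m i) → ZMod 2),
        prMass (fun ω : (Fin n → ZMod 2) × (∀ _ : Fin u, Fin n → ZMod 2)
            × (∀ i : Fin u, Fin (m i) → ZMod 2) =>
            (1 / 2 ^ n) * (∏ i, ν i (ω.2.1 i)) * ∏ i, ((1 : ℝ) / 2 ^ (m i)))
          (fun ω => ω.1 = a ∧
            (fun j => if c j then (H j).mulVec (ω.1 + ω.2.1 j) + ω.2.2 j else ω.2.2 j) = v)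
          = (1 / 2 ^ n) * ∏ i, ((1 : ℝ) / 2 ^ (m i))
        ∧ prMass (fun ω : (Fin n → ZMod 2) × (∀ _ : Fin u, Fin n → ZMod 2)
            × (∀ i : Fin u, Fin (m i) → ZMod 2) =>
            (1 / 2 ^ n) * (∏ i, ν i (ω.2.1 i)) * ∏ i, ((1 : ℝ) / 2 ^ (m i)))
          (fun ω => ω.1 = a) = 1 / 2 ^ n) := by
  set μ : (Fin n → ZMod 2) × (∀ _ : Fin u, Fin n → ZMod 2)
      × (∀ i : Fin u, Fin (m i) → ZMod 2) → ℝ := fun ω =>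
    (1 / 2 ^ n) * (∏ i, ν i (ω.2.1 i)) * ∏ i, ((1 : ℝ) / 2 ^ (m i)) with hμ
  set C : ℝ := ∏ i, ((1 : ℝ) / 2 ^ (m i)) with hCdef
  have hnn : (∑ nn : ∀ _ : Fin u, Fin n → ZMod 2, ∏ i, ν i (nn i)) = 1 := by
    rw [← Fintype.prod_sum]
    simp [hν1]
  have hcardk : ∀ i : Fin u, Fintype.card (Fin (m i) → ZMod 2) = 2 ^ (m i) := by
    intro i; rw [Fintype.card_fun]; simp [ZMod.card]
  -- the core double sum over (nn, kk) for a fixed biometric a and target v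
  have core : ∀ (a : Fin n → ZMod 2) (v : ∀ i : Fin u, Fin (m i) → ZMod 2),
      (∑ nn : ∀ _ : Fin u, Fin n → ZMod 2, ∑ kk : ∀ i : Fin u, Fin (m i) → ZMod 2,
          if (fun i => if c i then (H i).mulVec (a + nn i) + kk i else kk i) = v
          then (1 / 2 ^ n : ℝ) * (∏ i, ν i (nn i)) * C else 0)
        = (1 / 2 ^ n) * C := by
    intro a v
    have h : ∀ nn : ∀ _ : Fin u, Fin n → ZMod 2,
        (∑ kk : ∀ i : Fin u, Fin (m i) → ZMod 2,
          if (fun i => if c i then (H i).mulVec (a + nn i) + kk i else kk i) = v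
          then (1 / 2 ^ n : ℝ) * (∏ i, ν i (nn i)) * C else 0)
          = (1 / 2 ^ n : ℝ) * (∏ i, ν i (nn i)) * C :=
      fun nn => sum_kk c (fun i => (H i).mulVec (a + nn i)) v _
    rw [Finset.sum_congr rfl fun nn _ => h nn]
    rw [← Finset.sum_mul, ← Finset.mul_sum, hnn, mul_one]
  have hcard_a : (Fintype.card (Fin n → ZMod 2) : ℝ) = 2 ^ n := by
    rw [Fintype.card_fun]; push_cast [ZMod.card]; simp
  -- full-tuple probability
  have h2 : ∀ v : ∀ i : Fin u, Fin (m i) → ZMod 2,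
      prMass μ (fun ω =>
        (fun j => if c j then (H j).mulVec (ω.1 + ω.2.1 j) + ω.2.2 j else ω.2.2 j) = v) = C := by
    intro v
    unfold prMass
    rw [Fintype.sum_prod_type]
    simp only [Fintype.sum_prod_type, hμ]
    rw [Finset.sum_congr rfl fun a _ => core a v]
    rw [Finset.sum_const, nsmul_eq_mul, Finset.card_univ, hcard_a]
    rw [← mul_assoc, mul_one_div, div_self (pow_ne_zero _ two_ne_zero), one_mul]
  -- biometric marginal
  have hX : ∀ a : Fin n → ZMod 2, prMass μ (fun ω => ω.1 = a) = 1 / 2 ^ n := by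
    intro a
    unfold prMass
    rw [Fintype.sum_prod_type]
    simp only [Fintype.sum_prod_type, hμ]
    have inner : ∀ a' : Fin n → ZMod 2,
        (∑ nn : ∀ _ : Fin u, Fin n → ZMod 2, ∑ kk : ∀ i : Fin u, Fin (m i) → ZMod 2,
          if a' = a then (1 / 2 ^ n : ℝ) * (∏ i, ν i (nn i)) * C else 0)
          = if a' = a then (1 / 2 ^ n : ℝ) else 0 := by
      intro a'
      by_cases h : a' = a
      · simp only [h, if_true]
        have h1 : ∀ nn : ∀ _ : Fin u, Fin n → ZMod 2,
            (∑ _kk : ∀ i : Fin u, Fin (m i) → ZMod 2,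
              (1 / 2 ^ n : ℝ) * (∏ i, ν i (nn i)) * C)
              = (1 / 2 ^ n : ℝ) * (∏ i, ν i (nn i)) *
                  (((∏ i, 2 ^ (m i) : ℕ) : ℝ) * C) := by
          intro nn
          rw [Finset.sum_const, nsmul_eq_mul, Finset.card_univ, Fintype.card_pi]
          simp only [hcardk]
          push_cast
          ring
        rw [Finset.sum_congr rfl fun nn _ => h1 nn]
        simp only [show (((∏ i, 2 ^ (m i) : ℕ) : ℝ) * C) = 1 from prod_pow_mul_prod_one_div m, mul_one]
        rw [← Finset.mul_sum, hnn, mul_one]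
      · simp [h]
    rw [Finset.sum_congr rfl fun a' _ => inner a']
    simp
  -- joint probability of the biometric and the tuple
  have h3 : ∀ (a : Fin n → ZMod 2) (v : ∀ i : Fin u, Fin (m i) → ZMod 2),
      prMass μ (fun ω => ω.1 = a ∧
        (fun j => if c j then (H j).mulVec (ω.1 + ω.2.1 j) + ω.2.2 j else ω.2.2 j) = v)
        = (1 / 2 ^ n) * C := by
    intro a v
    unfold prMass
    rw [Fintype.sum_prod_type]
    simp only [Fintype.sum_prod_type, hμ, ite_and]
    have inner : ∀ a' : Fin n → ZMod 2,
        (∑ nn : ∀ _ : Fin u, Fin n → ZMod 2, ∑ kk : ∀ i : Fin u, Fin (m i) → ZMod 2,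
          if a' = a then
            (if (fun j => if c j then (H j).mulVec (a' + nn j) + kk j else kk j) = v
              then (1 / 2 ^ n : ℝ) * (∏ i, ν i (nn i)) * C else 0)
          else 0)
          = if a' = a then (1 / 2 ^ n : ℝ) * C else 0 := by
      intro a'
      by_cases h : a' = a
      · simp only [h, if_true]
        exact core a v
      · simp [h]
    rw [Finset.sum_congr rfl fun a' _ => inner a']
    simp
  -- the marginal of each component of the tuple
  have h1 : ∀ (i : Fin u) (vi : Fin (m i) → ZMod 2),
      prMass μ (fun ω =>
        (fun j => if c j then (H j).mulVec (ω.1 + ω.2.1 j) + ω.2.2 j else ω.2.2 j) i = vi)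
        = 1 / 2 ^ (m i) := by
    intro i vi
    have hdec := prMass_comp μ
      (fun ω => (fun j => if c j then (H j).mulVec (ω.1 + ω.2.1 j) + ω.2.2 j else ω.2.2 j))
      (fun v => v i = vi)
    rw [hdec]
    rw [Finset.sum_congr rfl fun v _ => by rw [h2 v]]
    -- now compute ∑ v, if v i = vi then C else 0
    rw [← Equiv.sum_comp (Equiv.piSplitAt i (fun j : Fin u => Fin (m j) → ZMod 2)).symm]
    rw [Fintype.sum_prod_type]
    have he : ∀ (x : Fin (m i) → ZMod 2) (r : ∀ j : { j // j ≠ i }, Fin (m (j : Fin u)) → ZMod 2),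
        ((Equiv.piSplitAt i (fun j : Fin u => Fin (m j) → ZMod 2)).symm (x, r)) i = x :=
      fun x r => dif_pos rfl
    simp only [he]
    rw [Finset.sum_comm]
    simp only [Finset.sum_ite_eq', Finset.mem_univ, if_true]
    rw [Finset.sum_const, nsmul_eq_mul, Finset.card_univ, Fintype.card_pi]
    simp only [hcardk]
    -- (∏ j : {j // j ≠ i}, 2 ^ m j) * C = 1 / 2 ^ m i
    have hsub : (∏ j : { j // j ≠ i }, ((2 : ℕ) ^ m (j : Fin u)))
        = ∏ j ∈ Finset.univ.erase i, 2 ^ m j := by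
      rw [Finset.prod_subtype (p := fun j => j ≠ i) (Finset.univ.erase i)
        (fun x => by simp [Finset.mem_erase]) (fun j => (2 : ℕ) ^ m j)]
    rw [hsub, hCdef, ← Finset.mul_prod_erase Finset.univ (fun j => (1 : ℝ) / 2 ^ (m j))
      (Finset.mem_univ i)]
    push_cast
    rw [mul_comm ((1 : ℝ) / 2 ^ (m i)) _, ← mul_assoc, ← Finset.prod_mul_distrib]
    rw [Finset.prod_congr rfl fun j _ => by
      rw [mul_one_div, div_self (pow_ne_zero (m j) (two_ne_zero (α := ℝ)))]]
    rw [Finset.prod_const_one, one_mul]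
  exact ⟨h1, h2, fun a v => ⟨h3 a v, hX a⟩⟩

open Classical in
/-- `u` two-factor secure-sketch systems are enrolled from the same
biometric: the sample space consists of `ω = (a, nn, kk)` where `a` is the underlying
biometric `A₀` (uniform on `(ZMod 2)^n`), `nn i` is the measurement noise of system `i`
(arbitrary distributions `ν i`), and `kk i` is the key of system `i` (uniform on
`(ZMod 2)^{m i}`), all mutually independent; system `i` enrolls `Aᵢ = A₀ ⊕ Nᵢ` and stores
`Sᵢ = Hᵢ Aᵢ ⊕ Kᵢ` with `Hᵢ` of full row rank.  For any choice `c` selecting, for each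
system, either its stored data (`c i = true`) or its key (`c i = false`), the resulting
tuple `V` is a collection of mutually independent uniform vectors
(`Pr[V = v] = Π_i 2^{-m i}` with uniform marginals) that is jointly independent of `A₀`;
in particular the privacy leakage is `I(A₀; V) = 0`. -/
theorem stmt_14 (n u : ℕ) (m : Fin u → ℕ)
    (H : ∀ i, Matrix (Fin (m i)) (Fin n) (ZMod 2))
    (hH : ∀ i, LinearIndependent (ZMod 2) (fun r => H i r))
    (ν : Fin u → (Fin n → ZMod 2) → ℝ)
    (hν0 : ∀ i x, 0 ≤ ν i x) (hν1 : ∀ i, ∑ x, ν i x = 1)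
    (c : Fin u → Bool) :
    let Ω : Type := (Fin n → ZMod 2) × (∀ _ : Fin u, Fin n → ZMod 2)
      × (∀ i : Fin u, Fin (m i) → ZMod 2)
    let μ : Ω → ℝ := fun ω =>
      (1 / 2 ^ n) * (∏ i, ν i (ω.2.1 i)) * ∏ i, ((1 : ℝ) / 2 ^ (m i))
    let V : Ω → ∀ i : Fin u, Fin (m i) → ZMod 2 := fun ω i =>
      if c i then (H i).mulVec (ω.1 + ω.2.1 i) + ω.2.2 i else ω.2.2 i
    (∀ (i : Fin u) (vi : Fin (m i) → ZMod 2),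
        prMass μ (fun ω => V ω i = vi) = 1 / 2 ^ (m i))
    ∧ (∀ v : ∀ i : Fin u, Fin (m i) → ZMod 2,
        prMass μ (fun ω => V ω = v) = ∏ i, ((1 : ℝ) / 2 ^ (m i)))
    ∧ (∀ (a : Fin n → ZMod 2) (v : ∀ i : Fin u, Fin (m i) → ZMod 2),
        prMass μ (fun ω => ω.1 = a ∧ V ω = v)
          = prMass μ (fun ω => ω.1 = a) * prMass μ (fun ω => V ω = v))
    ∧ mutualInfoM μ (fun ω => ω.1) V = 0 := by
  intro Ω μ V
  obtain ⟨h1, h2, h3⟩ := stmt_14_aux n u m H ν hν1 c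
  have h1' : ∀ (i : Fin u) (vi : Fin (m i) → ZMod 2),
      prMass μ (fun ω => V ω i = vi) = 1 / 2 ^ (m i) := fun i vi => h1 i vi
  have h2' : ∀ v : ∀ i : Fin u, Fin (m i) → ZMod 2,
      prMass μ (fun ω => V ω = v) = ∏ i, ((1 : ℝ) / 2 ^ (m i)) := fun v => h2 v
  have hXv : ∀ a : Fin n → ZMod 2, prMass μ (fun ω => ω.1 = a) = 1 / 2 ^ n :=
    fun a => (h3 a (fun _ _ => 0)).2
  have hJ : ∀ (a : Fin n → ZMod 2) (v : ∀ i : Fin u, Fin (m i) → ZMod 2),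
      prMass μ (fun ω => ω.1 = a ∧ V ω = v)
        = (1 / 2 ^ n) * ∏ i, ((1 : ℝ) / 2 ^ (m i)) := fun a v => (h3 a v).1
  have h3' : ∀ (a : Fin n → ZMod 2) (v : ∀ i : Fin u, Fin (m i) → ZMod 2),
      prMass μ (fun ω => ω.1 = a ∧ V ω = v)
        = prMass μ (fun ω => ω.1 = a) * prMass μ (fun ω => V ω = v) := by
    intro a v
    rw [hJ a v, h2' v, hXv a]
  have hCpos : (0 : ℝ) < ∏ i, ((1 : ℝ) / 2 ^ (m i)) :=
    Finset.prod_pos fun i _ => by positivity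
  have hmi : mutualInfoM μ (fun ω => ω.1) V = 0 := by
    simp only [mutualInfoM]
    refine Finset.sum_eq_zero fun a _ => Finset.sum_eq_zero fun v _ => ?_
    rw [h3' a v, hXv a, h2' v,
      div_self (ne_of_gt (by positivity)), Real.logb_one, mul_zero]
  exact ⟨h1', h2', h3', hmi⟩
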